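/- For every natural number N ≥ 1 the following identity of rational functions in q holds: ∑_{n=1}^{N} q^n (q^{n+1};q)_{N-n} / (q^{2n};q^2)_{N-n+1} = (1/(q;q)_N) ∑_{n=1}^{N} [N choose n] (-1)^{n-1} n q^{n(n+1)/2}/(1+q^n). -/

import Mathlib

open Finset

/-- q-Pochhammer symbol (a;q)_n = ∏_{k=0}^{n-1} (1 - a q^k). -/
noncomputable def qP (a q : ℂ) (n : ℕ) : ℂ := ∏ k ∈ Finset.range n, (1 - a * q ^ k)

/-- Gaussian (q-)binomial coefficient [N choose n]_q. -/
noncomputable def qBinom (q : ℂ) (N n : ℕ) : ℂ := qP q q N / (qP q q n * qP q q (N - n))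

lemma tri_succ (i : ℕ) : (i + 1) * (i + 1 + 1) / 2 = i * (i + 1) / 2 + (i + 1) := by
  obtain ⟨c, hc⟩ := Nat.even_mul_succ_self i
  have h1 : i * (i + 1) = 2 * c := by omega
  have h2 : (i + 1) * (i + 1 + 1) = 2 * (c + (i + 1)) := by
    rw [show (i + 1) * (i + 1 + 1) = i * (i + 1) + 2 * (i + 1) from by ring, h1]; ring
  rw [h1, h2]; omega

section lemmas
variable {q : ℂ} (hq : ‖q‖ < 1)

include hq in
lemma one_sub_ne {m : ℕ} (hm : 1 ≤ m) : (1 : ℂ) - q ^ m ≠ 0 := by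
  intro h
  have h2 : q ^ m = 1 := by linear_combination -h
  have h1 : ‖q ^ m‖ ≤ ‖q‖ := by
    rw [norm_pow]; exact pow_le_of_le_one (norm_nonneg q) hq.le (by omega)
  rw [h2, norm_one] at h1; linarith

include hq in
lemma one_add_ne {m : ℕ} (hm : 1 ≤ m) : (1 : ℂ) + q ^ m ≠ 0 := by
  intro h
  have h2 : q ^ m = -1 := by linear_combination h
  have h1 : ‖q ^ m‖ ≤ ‖q‖ := by
    rw [norm_pow]; exact pow_le_of_le_one (norm_nonneg q) hq.le (by omega)
  rw [h2, norm_neg, norm_one] at h1; linarith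

include hq in
lemma qP_ne (m : ℕ) : qP q q m ≠ 0 := by
  rw [qP, Finset.prod_ne_zero_iff]
  intro k _
  have h : q * q ^ k = q ^ (k + 1) := by ring
  rw [h]
  exact one_sub_ne hq (by omega)

lemma qP_succ (a : ℂ) (m : ℕ) : qP a q (m + 1) = qP a q m * (1 - a * q ^ m) :=
  Finset.prod_range_succ _ _

include hq in
lemma qBinom_ne (N n : ℕ) : qBinom q N n ≠ 0 := by
  rw [qBinom]
  exact div_ne_zero (qP_ne hq N) (mul_ne_zero (qP_ne hq n) (qP_ne hq (N - n)))

lemma qP_q_succ (m : ℕ) : qP q q (m + 1) = qP q q m * (1 - q ^ (m + 1)) := by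
  rw [qP_succ]; ring_nf

include hq in
lemma qBinom_self (N : ℕ) : qBinom q N N = 1 := by
  rw [qBinom, Nat.sub_self]
  have h : qP q q 0 = 1 := by simp [qP]
  rw [h, mul_one, div_self (qP_ne hq N)]

include hq in
lemma qBinom_zero (N : ℕ) : qBinom q N 0 = 1 := by
  rw [qBinom, Nat.sub_zero]
  have h : qP q q 0 = 1 := by simp [qP]
  rw [h, one_mul, div_self (qP_ne hq N)]

include hq in
lemma qPascal {i N : ℕ} (h : i < N) :
    qBinom q (N + 1) (i + 1) = qBinom q N (i + 1) + q ^ (N - i) * qBinom q N i := by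
  rw [qBinom, qBinom, qBinom]
  have e1 : N + 1 - (i + 1) = N - i := by omega
  have e2 : N - (i + 1) = N - i - 1 := by omega
  rw [e1, e2]
  have s1 : qP q q (N + 1) = qP q q N * (1 - q ^ (N + 1)) := qP_q_succ N
  have s2 : qP q q (N - i) = qP q q (N - i - 1) * (1 - q ^ (N - i)) := by
    have e : N - i = N - i - 1 + 1 := by omega
    rw [e, qP_q_succ, ← e]
  have s3 : qP q q (i + 1) = qP q q i * (1 - q ^ (i + 1)) := qP_q_succ i
  have s4 : q ^ (N + 1) = q ^ (i + 1) * q ^ (N - i) := by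
    rw [← pow_add]; congr 1; omega
  rw [s1, s2, s3, s4]
  have hx : (1 : ℂ) - q ^ (i + 1) ≠ 0 := one_sub_ne hq (by omega)
  have hy : (1 : ℂ) - q ^ (N - i) ≠ 0 := one_sub_ne hq (by omega)
  field_simp [qP_ne hq]
  ring

include hq in
lemma lemA {i N : ℕ} (h : i < N) :
    (1 + q ^ (N + 1)) * qBinom q (N + 1) (i + 1) - (1 - q ^ (N + 1)) * qBinom q N (i + 1)
      = q ^ (N - i) * (1 + q ^ (i + 1)) * qBinom q N i
        + q ^ (N + 1) * (1 + q ^ (i + 1)) * qBinom q N (i + 1) := by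
  rw [qBinom, qBinom, qBinom]
  have e1 : N + 1 - (i + 1) = N - i := by omega
  have e2 : N - (i + 1) = N - i - 1 := by omega
  rw [e1, e2]
  have s1 : qP q q (N + 1) = qP q q N * (1 - q ^ (N + 1)) := qP_q_succ N
  have s2 : qP q q (N - i) = qP q q (N - i - 1) * (1 - q ^ (N - i)) := by
    have e : N - i = N - i - 1 + 1 := by omega
    rw [e, qP_q_succ, ← e]
  have s3 : qP q q (i + 1) = qP q q i * (1 - q ^ (i + 1)) := qP_q_succ i
  have s4 : q ^ (N + 1) = q ^ (i + 1) * q ^ (N - i) := by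
    rw [← pow_add]; congr 1; omega
  rw [s1, s2, s3, s4]
  have hx : (1 : ℂ) - q ^ (i + 1) ≠ 0 := one_sub_ne hq (by omega)
  have hy : (1 : ℂ) - q ^ (N - i) ≠ 0 := one_sub_ne hq (by omega)
  field_simp [qP_ne hq]
  ring


include hq in
lemma qbinom_thm (N : ℕ) :
    ∑ j ∈ range (N + 1), ((-1) ^ j * q ^ (j * (j + 1) / 2) * qBinom q N j) = qP q q N := by
  induction N with
  | zero => simp [qBinom, qP]
  | succ N ih =>
    have key : ∀ i ∈ range N,
        (-1 : ℂ) ^ (i + 1) * q ^ ((i + 1) * (i + 1 + 1) / 2) * qBinom q (N + 1) (i + 1)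
          = (-1) ^ (i + 1) * q ^ ((i + 1) * (i + 1 + 1) / 2) * qBinom q N (i + 1)
            - q ^ (N + 1) * ((-1) ^ i * q ^ (i * (i + 1) / 2) * qBinom q N i) := by
      intro i hi
      rw [mem_range] at hi
      have p1 : q ^ ((i + 1) * (i + 1 + 1) / 2) = q ^ (i * (i + 1) / 2) * q ^ (i + 1) := by
        rw [← pow_add, tri_succ]
      have p2 : q ^ (i + 1) * q ^ (N - i) = q ^ (N + 1) := by
        rw [← pow_add]; congr 1; omega
      rw [qPascal hq hi, p1]
      linear_combination (-(1 : ℂ)) ^ i * q ^ (i * (i + 1) / 2) * qBinom q N i * (-p2)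
    rw [Finset.sum_range_succ', Finset.sum_range_succ, Finset.sum_congr rfl key,
      Finset.sum_sub_distrib, ← Finset.mul_sum]
    have h1 : ∑ i ∈ range N, (-1 : ℂ) ^ (i + 1) * q ^ ((i + 1) * (i + 1 + 1) / 2) * qBinom q N (i + 1)
        = qP q q N - 1 := by
      have := Finset.sum_range_succ' (fun j => (-1 : ℂ) ^ j * q ^ (j * (j + 1) / 2) * qBinom q N j) N
      rw [ih] at this
      simp only [pow_zero, one_mul, Nat.zero_mul, Nat.zero_div, qBinom_zero hq] at this
      linear_combination -this
    have h2 : ∑ i ∈ range N, (-1 : ℂ) ^ i * q ^ (i * (i + 1) / 2) * qBinom q N i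
        = qP q q N - (-1) ^ N * q ^ (N * (N + 1) / 2) := by
      have := Finset.sum_range_succ (fun j => (-1 : ℂ) ^ j * q ^ (j * (j + 1) / 2) * qBinom q N j) N
      rw [ih] at this
      rw [qBinom_self hq] at this
      linear_combination -this
    rw [h1, h2, qBinom_self hq, qBinom_zero hq, qP_q_succ]
    have p3 : q ^ ((N + 1) * (N + 1 + 1) / 2) = q ^ (N * (N + 1) / 2) * q ^ (N + 1) := by
      rw [← pow_add, tri_succ]
    rw [p3]
    push_cast
    ring

end lemmas

noncomputable def Sfun (q : ℂ) (N : ℕ) : ℂ :=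
  ∑ n ∈ Finset.Icc 1 N, qBinom q N n * ((-1) ^ (n - 1) * (n : ℂ) * q ^ (n * (n + 1) / 2) / (1 + q ^ n))

noncomputable def gF (q : ℂ) (M n : ℕ) : ℂ :=
  qBinom q M n * ((-1) ^ (n - 1) * (n : ℂ) * q ^ (n * (n + 1) / 2) / (1 + q ^ n))

noncomputable def cF (q : ℂ) (N j : ℕ) : ℂ := (-1) ^ j * q ^ (j * (j + 1) / 2) * qBinom q N j

noncomputable def aF (q : ℂ) (N i : ℕ) : ℂ :=
  (-1) ^ i * ((i : ℂ) + 1) * q ^ (N + 1 + i * (i + 1) / 2) * qBinom q N i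
    + q ^ (N + 1) * ∑ k ∈ Ico i N, cF q N (k + 1)

lemma sum_Icc_one (F : ℕ → ℂ) (N : ℕ) : ∑ n ∈ Icc 1 N, F n = ∑ i ∈ range N, F (i + 1) := by
  rw [← Finset.Ico_add_one_right_eq_Icc, Finset.sum_Ico_eq_sum_range, Nat.add_sub_cancel]
  exact Finset.sum_congr rfl fun i _ => by rw [Nat.add_comm]

section srec
variable {q : ℂ} (hq : ‖q‖ < 1)

include hq in
lemma tele {i N : ℕ} (hi : i < N) :
    (1 + q ^ (N + 1)) * gF q (N + 1) (i + 1) - (1 - q ^ (N + 1)) * gF q N (i + 1)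
      = aF q N i - aF q N (i + 1) := by
  have hsplit : (∑ k ∈ Ico i N, cF q N (k + 1))
      = cF q N (i + 1) + ∑ k ∈ Ico (i + 1) N, cF q N (k + 1) :=
    Finset.sum_eq_sum_Ico_succ_bot hi _
  simp only [aF, gF, Nat.add_sub_cancel]
  rw [hsplit]
  simp only [cF]
  have hA := lemA hq hi
  have p1 : q ^ ((i + 1) * (i + 1 + 1) / 2) = q ^ (i * (i + 1) / 2) * q ^ (i + 1) := by
    rw [← pow_add, tri_succ]
  have p2 : q ^ (i + 1) * q ^ (N - i) = q ^ (N + 1) := by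
    rw [← pow_add]; congr 1; omega
  have p3 : q ^ (N + 1 + i * (i + 1) / 2) = q ^ (N + 1) * q ^ (i * (i + 1) / 2) := by
    rw [← pow_add]
  have p4 : q ^ (N + 1 + (i + 1) * (i + 1 + 1) / 2)
      = q ^ (N + 1) * (q ^ (i * (i + 1) / 2) * q ^ (i + 1)) := by
    rw [← p1, ← pow_add]
  have hx : (1 : ℂ) + q ^ (i + 1) ≠ 0 := one_add_ne hq (by omega)
  rw [p1, p3, p4]
  push_cast
  field_simp
  linear_combination ((-1 : ℂ)) ^ i * ((i : ℂ) + 1) * q ^ (i * (i + 1) / 2) * q ^ (i + 1) * hA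
    + ((-1 : ℂ)) ^ i * ((i : ℂ) + 1) * q ^ (i * (i + 1) / 2) * (1 + q ^ (i + 1))
      * qBinom q N i * p2

include hq in
lemma aF_zero (N : ℕ) : aF q N 0 = q ^ (N + 1) * qP q q N := by
  rw [aF]
  have h0 : ∑ k ∈ Ico 0 N, cF q N (k + 1) = qP q q N - 1 := by
    have h := Finset.sum_range_succ' (cF q N) N
    rw [show ∑ j ∈ range (N + 1), cF q N j = qP q q N from qbinom_thm hq N] at h
    have hc0 : cF q N 0 = 1 := by simp [cF, qBinom_zero hq]
    rw [hc0] at h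
    have hIco : Ico 0 N = range N := by rw [Finset.range_eq_Ico]
    rw [hIco]
    linear_combination -h
  rw [h0]
  simp only [pow_zero, Nat.zero_mul, Nat.zero_div, Nat.add_zero]
  rw [qBinom_zero hq]
  push_cast
  ring

include hq in
lemma aF_top (N : ℕ) : aF q N N = (1 + q ^ (N + 1)) * gF q (N + 1) (N + 1) := by
  rw [aF, gF]
  rw [Finset.Ico_self, Finset.sum_empty, qBinom_self hq, qBinom_self hq, Nat.add_sub_cancel]
  have p5 : q ^ ((N + 1) * (N + 1 + 1) / 2) = q ^ (N + 1) * q ^ (N * (N + 1) / 2) := by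
    rw [← pow_add]
    congr 1
    rw [tri_succ]; omega
  have hw : (1 : ℂ) + q ^ (N + 1) ≠ 0 := one_add_ne hq (by omega)
  rw [p5]
  push_cast
  rw [mul_comm ((1 : ℂ) + q ^ (N + 1)), one_mul, div_mul_cancel₀ _ hw]
  ring

include hq in
lemma Srec (N : ℕ) : Sfun q (N + 1) * (1 + q ^ (N + 1))
    = (1 - q ^ (N + 1)) * Sfun q N + q ^ (N + 1) * qP q q N := by
  have hS1 : Sfun q (N + 1) = ∑ i ∈ range N, gF q (N + 1) (i + 1) + gF q (N + 1) (N + 1) := by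
    rw [show Sfun q (N + 1) = ∑ n ∈ Icc 1 (N + 1), gF q (N + 1) n from rfl,
      sum_Icc_one (fun n => gF q (N + 1) n) (N + 1), Finset.sum_range_succ]
  have hS0 : Sfun q N = ∑ i ∈ range N, gF q N (i + 1) := by
    rw [show Sfun q N = ∑ n ∈ Icc 1 N, gF q N n from rfl,
      sum_Icc_one (fun n => gF q N n) N]
  have htele_sum : ∑ i ∈ range N,
      ((1 + q ^ (N + 1)) * gF q (N + 1) (i + 1) - (1 - q ^ (N + 1)) * gF q N (i + 1))
        = aF q N 0 - aF q N N := by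
    rw [Finset.sum_congr rfl (fun i hi => tele hq (mem_range.mp hi)),
      Finset.sum_range_sub' (aF q N) N]
  rw [Finset.sum_sub_distrib, ← Finset.mul_sum, ← Finset.mul_sum, aF_zero hq, aF_top hq]
    at htele_sum
  rw [hS1, hS0]
  linear_combination htele_sum
end srec

noncomputable def Lfun (q : ℂ) (N : ℕ) : ℂ :=
  ∑ n ∈ Finset.Icc 1 N, q ^ n * qP (q ^ (n + 1)) q (N - n) / qP (q ^ (2 * n)) (q ^ 2) (N - n + 1)

noncomputable def LtF (q : ℂ) (M n : ℕ) : ℂ :=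
  q ^ n * qP (q ^ (n + 1)) q (M - n) / qP (q ^ (2 * n)) (q ^ 2) (M - n + 1)

section lrec
variable {q : ℂ} (hq : ‖q‖ < 1)

include hq in
lemma qP2_ne {n : ℕ} (hn : 1 ≤ n) (m : ℕ) : qP (q ^ (2 * n)) (q ^ 2) m ≠ 0 := by
  rw [qP, Finset.prod_ne_zero_iff]
  intro k _
  have h : q ^ (2 * n) * (q ^ 2) ^ k = q ^ (2 * n + 2 * k) := by
    rw [← pow_mul, ← pow_add]
  rw [h]
  exact one_sub_ne hq (by omega)

include hq in
lemma Lterm {i N : ℕ} (hi : i < N) :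
    LtF q (N + 1) (i + 1) * ((1 + q ^ (N + 1)) * (1 - q ^ (N + 1)))
      = LtF q N (i + 1) * (1 - q ^ (N + 1)) := by
  rw [LtF, LtF]
  have e1 : N + 1 - (i + 1) = (N - i - 1) + 1 := by omega
  have e2 : N + 1 - (i + 1) + 1 = (N - i - 1 + 1) + 1 := by omega
  have e3 : N - (i + 1) = N - i - 1 := by omega
  have e4 : N - (i + 1) + 1 = N - i - 1 + 1 := by omega
  rw [e2, e1, e4, e3, qP_succ (q := q) (q ^ (i + 1 + 1)) (N - i - 1),
    qP_succ (q := q ^ 2) (q ^ (2 * (i + 1))) (N - i - 1 + 1)]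
  have p1 : q ^ (i + 1 + 1) * q ^ (N - i - 1) = q ^ (N + 1) := by
    rw [← pow_add]; congr 1; omega
  have p2 : q ^ (2 * (i + 1)) * (q ^ 2) ^ (N - i - 1 + 1) = q ^ (N + 1) * q ^ (N + 1) := by
    rw [← pow_mul, ← pow_add, ← pow_add]; congr 1; omega
  rw [p1, p2]
  have hw1 : (1 : ℂ) - q ^ (N + 1) ≠ 0 := one_sub_ne hq (by omega)
  have hww : (1 : ℂ) - q ^ (N + 1) * q ^ (N + 1) ≠ 0 := by
    rw [← pow_add]; exact one_sub_ne hq (by omega)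
  have hd : qP (q ^ (2 * (i + 1))) (q ^ 2) (N - i - 1 + 1) ≠ 0 := qP2_ne hq (by omega) _
  field_simp
  have hww' : (1 : ℂ) - (q ^ (N + 1)) ^ 2 ≠ 0 := by rw [sq]; exact hww
  rw [div_eq_iff hww']
  ring

include hq in
lemma Llast (N : ℕ) :
    LtF q (N + 1) (N + 1) * ((1 + q ^ (N + 1)) * (1 - q ^ (N + 1))) = q ^ (N + 1) := by
  rw [LtF, Nat.sub_self]
  have h0 : qP (q ^ (N + 1 + 1)) q 0 = 1 := by simp [qP]
  have h1 : qP (q ^ (2 * (N + 1))) (q ^ 2) 1 = 1 - q ^ (N + 1) * q ^ (N + 1) := by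
    rw [qP, Finset.prod_range_one, pow_zero, mul_one,
      show 2 * (N + 1) = (N + 1) + (N + 1) from by omega, pow_add]
  rw [h0, h1]
  have hw0 : (1 : ℂ) - q ^ (N + 1) ≠ 0 := one_sub_ne hq (by omega)
  have hw2 : (1 : ℂ) + q ^ (N + 1) ≠ 0 := one_add_ne hq (by omega)
  have hww : (1 : ℂ) - q ^ (N + 1) * q ^ (N + 1) ≠ 0 := by
    rw [← pow_add]; exact one_sub_ne hq (by omega)
  rw [div_mul_eq_mul_div, div_eq_iff hww]
  ring

include hq in
lemma Lrec (N : ℕ) : Lfun q (N + 1) * ((1 + q ^ (N + 1)) * (1 - q ^ (N + 1)))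
    = Lfun q N * (1 - q ^ (N + 1)) + q ^ (N + 1) := by
  have hL1 : Lfun q (N + 1) = ∑ i ∈ range N, LtF q (N + 1) (i + 1) + LtF q (N + 1) (N + 1) := by
    rw [show Lfun q (N + 1) = ∑ n ∈ Icc 1 (N + 1), LtF q (N + 1) n from rfl,
      sum_Icc_one (fun n => LtF q (N + 1) n) (N + 1), Finset.sum_range_succ]
  have hL0 : Lfun q N = ∑ i ∈ range N, LtF q N (i + 1) := by
    rw [show Lfun q N = ∑ n ∈ Icc 1 N, LtF q N n from rfl, sum_Icc_one (fun n => LtF q N n) N]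
  rw [hL1, hL0, add_mul, Finset.sum_mul, Finset.sum_mul]
  rw [Finset.sum_congr rfl (fun i hi => Lterm hq (mem_range.mp hi)), Llast hq N]

end lrec

/-- Generating function of N_SC(n,N): two representations. -/
theorem stmt_9 (N : ℕ) (hN : 1 ≤ N) (q : ℂ) (hq : ‖q‖ < 1) :
    ∑ n ∈ Finset.Icc 1 N, q ^ n * qP (q ^ (n + 1)) q (N - n) / qP (q ^ (2 * n)) (q ^ 2) (N - n + 1) =
      (1 / qP q q N) * ∑ n ∈ Finset.Icc 1 N,
        qBinom q N n * ((-1) ^ (n - 1) * (n : ℂ) * q ^ (n * (n + 1) / 2) / (1 + q ^ n)) := by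
  show Lfun q N = 1 / qP q q N * Sfun q N
  induction N, hN using Nat.le_induction with
  | base =>
    have h1 : (1 : ℂ) - q ≠ 0 := by
      have := one_sub_ne hq (le_refl 1); simpa using this
    have h2 : (1 : ℂ) + q ≠ 0 := by
      have := one_add_ne hq (le_refl 1); simpa using this
    have h3 : (1 : ℂ) - q ^ 2 ≠ 0 := by
      rw [show (1 : ℂ) - q ^ 2 = (1 - q) * (1 + q) from by ring]
      exact mul_ne_zero h1 h2
    simp [Lfun, Sfun, qP, qBinom]
    field_simp
    all_goals first | ring1 | exact Or.inl (by ring1) | simp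
  | succ N hN1 ih =>
    have hw1 : (1 : ℂ) - q ^ (N + 1) ≠ 0 := one_sub_ne hq (by omega)
    have hw2 : (1 : ℂ) + q ^ (N + 1) ≠ 0 := one_add_ne hq (by omega)
    have hPN : qP q q N ≠ 0 := qP_ne hq N
    have hPN1 : qP q q (N + 1) ≠ 0 := qP_ne hq (N + 1)
    have IH' : Lfun q N * qP q q N = Sfun q N := by
      rw [ih]; field_simp
    rw [one_div_mul_eq_div, eq_div_iff hPN1]
    refine mul_right_cancel₀ hw2 ?_
    rw [Srec hq N, qP_q_succ N]
    linear_combination qP q q N * Lrec hq N + (1 - q ^ (N + 1)) * IH'
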